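/- Let $p$ be prime, $F$ an algebraically closed field of characteristic $p$, and $G = \{\sigma_{a,b} = \begin{pmatrix} 1 & a \\ 0 & b \end{pmatrix} : a, b \in \mathbb{F}_p, b \neq 0 \}$, a group of order $p(p-1)$, acting naturally on $W = F^2 = \langle X, Y \rangle$. For $1 \le n < p$, consider the $n$-th symmetric power $V_n = S^n(W)$ with basis $e_j = X^{n-j} Y^j$. Then: (a) $V_n^G = \langle X^n \rangle$ is one-dimensional; (b) $(V_n^*)^G = \{0\}$ for $1 \le n \le p-2$ and $(V_n^*)^G = \langle z_n \rangle$ for $n = p-1$, where $z_i$ is the dual basis; and (c) $\delta(G, V_n) = p$. -/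

import Mathlib

open MvPolynomial

/-- The matrix of `σ_{a,b}` acting on `V_n = S^n(W)` in the basis `e_j = X^{n-j}Y^j`:
`σ_{a,b}(e_j) = ∑_{i ≤ j} (j choose i) a^{j-i} b^i e_i`. -/
def symMat {F : Type*} [Field F] (n : ℕ) (a b : F) :
    Matrix (Fin (n + 1)) (Fin (n + 1)) F :=
  fun i j => if (i : ℕ) ≤ (j : ℕ) then
    (Nat.choose (j : ℕ) (i : ℕ) : F) * a ^ ((j : ℕ) - (i : ℕ)) * b ^ (i : ℕ) else 0

/-- `a` lies in the prime field `𝔽_p ⊆ F` (char `p`) iff `a^p = a`. -/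
def inFp {F : Type*} [Field F] (p : ℕ) (a : F) : Prop := a ^ p = a

/-- Substitution action of a matrix on the polynomial ring. -/
noncomputable def matAct {F : Type*} [Field F] {N : ℕ} (A : Matrix (Fin N) (Fin N) F) :
    MvPolynomial (Fin N) F →ₐ[F] MvPolynomial (Fin N) F :=
  aeval fun i => ∑ j, C (A i j) * X j

/-- `f` is invariant under the group `G = {σ_{a,b} : a, b ∈ 𝔽_p, b ≠ 0}`. -/
def symInv {F : Type*} [Field F] (p n : ℕ) (f : MvPolynomial (Fin (n + 1)) F) : Prop :=
  ∀ a b : F, inFp p a → inFp p b → b ≠ 0 → matAct (symMat n a b) f = f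

/-- `v ∈ V_n` is a fixed point of `G`. -/
def symFixed {F : Type*} [Field F] (p n : ℕ) (v : Fin (n + 1) → F) : Prop :=
  ∀ a b : F, inFp p a → inFp p b → b ≠ 0 → Matrix.mulVec (symMat n a b) v = v

/-- A linear form (covector) `u` on `V_n` is `G`-invariant. -/
def symDualFixed {F : Type*} [Field F] (p n : ℕ) (u : Fin (n + 1) → F) : Prop :=
  ∀ a b : F, inFp p a → inFp p b → b ≠ 0 → Matrix.vecMul u (symMat n a b) = u

/-- `ε(G,v)`. -/
noncomputable def epsSym {F : Type*} [Field F] (p n : ℕ) (v : Fin (n + 1) → F) : ℕ :=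
  sInf {d : ℕ | 0 < d ∧ ∃ f : MvPolynomial (Fin (n + 1)) F,
    symInv p n f ∧ f.IsHomogeneous d ∧ eval v f ≠ 0}

/-- `δ(G, V_n)`. -/
noncomputable def deltaSym {F : Type*} [Field F] (p n : ℕ) : ℕ :=
  sSup {e : ℕ | ∃ v : Fin (n + 1) → F, v ≠ 0 ∧ symFixed p n v ∧ e = epsSym p n v}

section Aux
variable {F : Type*} [Field F]

lemma mulVec_apply' {N : ℕ} (A : Matrix (Fin N) (Fin N) F) (v : Fin N → F) (i : Fin N) :
    A.mulVec v i = ∑ j, A i j * v j := by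
  simp [Matrix.mulVec, dotProduct]

lemma vecMul_apply' {N : ℕ} (A : Matrix (Fin N) (Fin N) F) (u : Fin N → F) (j : Fin N) :
    Matrix.vecMul u A j = ∑ i, u i * A i j := by
  simp [Matrix.vecMul, dotProduct]

lemma eval_aeval_self {σ : Type*} (g : σ → MvPolynomial σ F) (v : σ → F)
    (f : MvPolynomial σ F) :
    eval v (aeval g f) = eval (fun i => eval v (g i)) f := by
  induction f using MvPolynomial.induction_on with
  | C a => simp
  | add f g hf hg => simp only [map_add, eval_add, hf, hg]
  | mul_X f i hf => simp only [map_mul, eval_mul, hf, aeval_X, eval_X]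

lemma polyEval_aeval {σ : Type*} (g : σ → Polynomial F) (s : F)
    (f : MvPolynomial σ F) :
    Polynomial.eval s (aeval g f) = eval (fun i => Polynomial.eval s (g i)) f := by
  induction f using MvPolynomial.induction_on with
  | C a => simp
  | add f g hf hg => simp only [map_add, Polynomial.eval_add, eval_add, hf, hg]
  | mul_X f i hf => simp only [map_mul, Polynomial.eval_mul, eval_mul, hf, aeval_X, eval_X]

lemma eval_matAct {N : ℕ} (A : Matrix (Fin N) (Fin N) F) (v : Fin N → F)
    (f : MvPolynomial (Fin N) F) :
    eval v (matAct A f) = eval (A.mulVec v) f := by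
  rw [matAct, eval_aeval_self]
  have h : (fun i => eval v (∑ j, C (A i j) * X j)) = A.mulVec v := by
    funext i
    rw [mulVec_apply']
    simp
  rw [h]

lemma sum_eq_pair' {N : ℕ} (t : Fin N → F) (i j : Fin N) (hij : i ≠ j)
    (h : ∀ k, k ≠ i → k ≠ j → t k = 0) : ∑ k, t k = t i + t j := by
  rw [← Finset.sum_pair hij]
  refine (Finset.sum_subset (Finset.subset_univ _) fun k _ hk => ?_).symm
  simp only [Finset.mem_insert, Finset.mem_singleton, not_or] at hk
  exact h k hk.1 hk.2

lemma IsHomog.eval_smul {σ : Type*} [Fintype σ] {f : MvPolynomial σ F} {d : ℕ}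
    (hf : f.IsHomogeneous d) (s : F) (w : σ → F) :
    eval (s • w) f = s ^ d * eval w f := by
  rw [eval_eq', eval_eq', Finset.mul_sum]
  refine Finset.sum_congr rfl fun m hm => ?_
  have hdeg : ∑ i, m i = d := by
    have h1 := hf (mem_support_iff.mp hm)
    erw [← Finsupp.degree_eq_weight_one] at h1
    rw [← h1, Finsupp.degree_apply]
    exact (Finset.sum_subset (Finset.subset_univ _)
      (fun i _ hi => Finsupp.notMem_support_iff.mp hi)).symm
  simp only [Pi.smul_apply, smul_eq_mul, mul_pow, Finset.prod_mul_distrib]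
  rw [Finset.prod_pow_eq_pow_sum, hdeg]
  ring

end Aux

section Aux2
variable {F : Type*} [Field F]

noncomputable def linForm (n : ℕ) (c : F) : MvPolynomial (Fin (n + 1)) F :=
  ∑ j : Fin (n + 1), C (c ^ (j : ℕ)) * X j

lemma matAct_linForm {n : ℕ} (a b c : F) :
    matAct (symMat n a b) (linForm n c) = linForm n (a + c * b) := by
  have key : ∀ k : Fin (n + 1),
      ∑ j : Fin (n + 1), c ^ (j : ℕ) * symMat n a b j k = (a + c * b) ^ (k : ℕ) := by
    intro k
    have h1 : ∑ j : Fin (n + 1), c ^ (j : ℕ) * symMat n a b j k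
        = ∑ j ∈ Finset.range (n + 1), c ^ j *
            (if j ≤ (k : ℕ) then ((k : ℕ).choose j : F) * a ^ ((k : ℕ) - j) * b ^ j else 0) := by
      rw [← Fin.sum_univ_eq_sum_range (fun j => c ^ j *
        (if j ≤ (k : ℕ) then ((k : ℕ).choose j : F) * a ^ ((k : ℕ) - j) * b ^ j else 0)) (n + 1)]
      rfl
    rw [h1]
    rw [← Finset.sum_subset (Finset.range_subset_range.mpr (by omega : (k : ℕ) + 1 ≤ n + 1))
      (fun j _ hj => by
        rw [if_neg (by simp only [Finset.mem_range] at hj ⊢; omega), mul_zero])]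
    rw [add_comm a (c * b), add_pow]
    refine Finset.sum_congr rfl fun j hj => ?_
    have hjk : j ≤ (k : ℕ) := Nat.lt_succ_iff.mp (Finset.mem_range.mp hj)
    rw [if_pos hjk, mul_pow]
    ring
  have expand : (matAct (symMat n a b)) (linForm n c)
      = ∑ k : Fin (n + 1), C (∑ j : Fin (n + 1), c ^ (j : ℕ) * symMat n a b j k) * X k := by
    rw [linForm, map_sum]
    simp only [matAct, map_mul, aeval_C, aeval_X, algebraMap_eq]
    simp only [Finset.mul_sum]
    rw [Finset.sum_comm]
    refine Finset.sum_congr rfl fun k _ => ?_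
    rw [map_sum, Finset.sum_mul]
    refine Finset.sum_congr rfl fun j _ => ?_
    rw [map_mul]
    ring
  rw [expand, linForm]
  exact Finset.sum_congr rfl fun k _ => by rw [key k]

lemma linForm_isHomog (n : ℕ) (c : F) : (linForm n c).IsHomogeneous 1 := by
  unfold linForm
  exact IsHomogeneous.sum _ _ _ fun j _ => isHomogeneous_C_mul_X _ _

lemma eval_linForm_single (n : ℕ) (c γ : F) :
    eval (c • (Pi.single 0 1 : Fin (n + 1) → F)) (linForm n γ) = c := by
  rw [linForm, map_sum]
  rw [Finset.sum_eq_single (0 : Fin (n + 1))]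
  · simp
  · intro j _ hj
    simp [Pi.single_apply, hj]
  · simp

lemma exists_zmod {p : ℕ} [Fact p.Prime] [CharP F p] {a : F} (ha : a ^ p = a) :
    ∃ c : ZMod p, (ZMod.castHom (dvd_refl p) F) c = a := by
  classical
  set φ := ZMod.castHom (dvd_refl p) F with hφ
  have hplt : 1 < p := (Fact.out : p.Prime).one_lt
  have hinj : Function.Injective φ := φ.injective
  have hne : (Polynomial.X ^ p - Polynomial.X : Polynomial F) ≠ 0 :=
    FiniteField.X_pow_card_sub_X_ne_zero F hplt
  have hdeg : (Polynomial.X ^ p - Polynomial.X : Polynomial F).natDegree = p :=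
    FiniteField.X_pow_card_sub_X_natDegree_eq F hplt
  set T := (Polynomial.X ^ p - Polynomial.X : Polynomial F).roots.toFinset with hT
  have hsub : Finset.univ.image φ ⊆ T := by
    intro x hx
    obtain ⟨c, _, rfl⟩ := Finset.mem_image.mp hx
    rw [Multiset.mem_toFinset, Polynomial.mem_roots hne]
    simp only [Polynomial.IsRoot, Polynomial.eval_sub, Polynomial.eval_pow, Polynomial.eval_X,
      sub_eq_zero]
    rw [← map_pow, ZMod.pow_card]
  have hcard : T.card ≤ p :=
    le_trans (Multiset.toFinset_card_le _) (le_trans (Polynomial.card_roots' _) (le_of_eq hdeg))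
  have him : (Finset.univ.image φ).card = p := by
    rw [Finset.card_image_of_injective _ hinj, Finset.card_univ, ZMod.card]
  have heq : Finset.univ.image φ = T := Finset.eq_of_subset_of_card_le hsub (by omega)
  have haT : a ∈ T := by
    rw [Multiset.mem_toFinset, Polynomial.mem_roots hne]
    simp only [Polynomial.IsRoot, Polynomial.eval_sub, Polynomial.eval_pow, Polynomial.eval_X,
      sub_eq_zero]
    exact ha
  rw [← heq] at haT
  obtain ⟨c, _, hc⟩ := Finset.mem_image.mp haT
  exact ⟨c, hc⟩

end Aux2

section PartA
variable {F : Type*} [Field F]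

lemma partA_forward {p n : ℕ} (hp : p.Prime) [CharP F p] (hn1 : 1 ≤ n) (hnp : n < p)
    {v : Fin (n + 1) → F} (hv : symFixed p n v) :
    ∀ i : Fin (n + 1), 1 ≤ (i : ℕ) → v i = 0 := by
  have E := hv 1 1 (one_pow p) (one_pow p) one_ne_zero
  have row : ∀ i : Fin (n + 1), ∑ j : Fin (n + 1), symMat n 1 1 i j * v j = v i := by
    intro i
    rw [← mulVec_apply']
    exact congrFun E i
  suffices H : ∀ k : ℕ, ∀ i : Fin (n + 1), n - (i : ℕ) = k → 1 ≤ (i : ℕ) → v i = 0 by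
    intro i hi; exact H _ i rfl hi
  intro k
  induction k using Nat.strong_induction_on with
  | _ k IH =>
    intro i hik hi1
    have hin : (i : ℕ) ≤ n := by omega
    set i' : Fin (n + 1) := ⟨(i : ℕ) - 1, by omega⟩ with hi'def
    have hii' : (i' : ℕ) = (i : ℕ) - 1 := rfl
    have hsum := row i'
    have hpair : ∑ j : Fin (n + 1), symMat n 1 1 i' j * v j
        = 1 * v i' + ((i : ℕ) : F) * v i := by
      rw [sum_eq_pair' _ i' i (Fin.ne_of_val_ne (by omega)) ?_]
      · congr 2
        · simp [symMat]
        · show symMat n 1 1 i' i = _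
          obtain ⟨m, hm⟩ : ∃ m, (i : ℕ) = m + 1 := ⟨(i : ℕ) - 1, by omega⟩
          have hch : (i : ℕ).choose ((i : ℕ) - 1) = (i : ℕ) := by
            rw [hm, Nat.succ_sub_one, Nat.choose_succ_self_right]
          simp only [symMat, hii', one_pow, mul_one, if_pos (by omega : (i:ℕ) - 1 ≤ (i:ℕ))]
          rw [hch]
      · intro j hji' hji
        rcases lt_or_ge (j : ℕ) ((i' : ℕ)) with h | h
        · have hz : symMat n (1 : F) 1 i' j = 0 := by
            simp only [symMat]
            rw [if_neg (show ¬((i' : ℕ) ≤ (j : ℕ)) by omega)]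
          rw [hz, zero_mul]
        · have hj1 : (i : ℕ) < (j : ℕ) := by
            rcases Nat.lt_or_ge (i : ℕ) (j : ℕ) with h' | h'
            · exact h'
            · exfalso
              have := Fin.val_ne_of_ne hji'
              have := Fin.val_ne_of_ne hji
              omega
          rw [IH (n - (j : ℕ)) (by omega) j rfl (by omega), mul_zero]
    rw [hpair] at hsum
    have hi0 : (((i : ℕ) : ℕ) : F) ≠ 0 := by
      rw [Ne, CharP.cast_eq_zero_iff F p]
      exact Nat.not_dvd_of_pos_of_lt (by omega) (by omega)
    have hvi' : v i' = v i' := rfl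
    have : ((i : ℕ) : F) * v i = 0 := by linear_combination hsum
    exact (mul_eq_zero.mp this).resolve_left hi0

lemma partA_backward {p n : ℕ} (c : F) :
    symFixed p n (c • (Pi.single 0 1 : Fin (n + 1) → F)) := by
  intro a b _ _ _
  funext i
  rw [mulVec_apply']
  rw [Finset.sum_eq_single (0 : Fin (n + 1))]
  · rcases eq_or_ne i 0 with rfl | hi
    · simp [symMat]
    · have : ¬ ((i : ℕ) ≤ 0) := by
        have := Fin.val_ne_of_ne hi
        simp only [Fin.val_zero] at this
        omega
      simp [symMat, this, Pi.single_apply, hi]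
  · intro j _ hj
    simp [Pi.single_apply, hj]
  · simp

end PartA

section PartB
variable {F : Type*} [Field F]

lemma partB_u0 {p n : ℕ} (hn1 : 1 ≤ n)
    {u : Fin (n + 1) → F} (hu : symDualFixed p n u) : u 0 = 0 := by
  have E := hu 1 1 (one_pow p) (one_pow p) one_ne_zero
  set j1 : Fin (n + 1) := ⟨1, by omega⟩ with hj1
  have col : ∑ i : Fin (n + 1), u i * symMat n (1 : F) 1 i j1 = u j1 := by
    rw [← vecMul_apply']
    exact congrFun E j1
  have hpair : ∑ i : Fin (n + 1), u i * symMat n (1 : F) 1 i j1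
      = u 0 * 1 + u j1 * 1 := by
    rw [sum_eq_pair' _ 0 j1 (Fin.ne_of_val_ne (by simp [hj1]))]
    · congr 2
      · simp [symMat, j1]
      · simp [symMat]
    · intro k hk0 hkj
      have h0 := Fin.val_ne_of_ne hk0
      have h1 := Fin.val_ne_of_ne hkj
      simp only [Fin.val_zero, hj1] at h0 h1
      have : ¬ ((k : ℕ) ≤ (j1 : ℕ)) := by simp only [hj1]; omega
      have hz : symMat n (1 : F) 1 k j1 = 0 := by
        simp only [symMat]
        rw [if_neg this]
      rw [hz, mul_zero]
  rw [hpair] at col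
  linear_combination col

lemma partB_torus {p n : ℕ} (hp : p.Prime) [CharP F p] (hnp : n < p)
    {u : Fin (n + 1) → F} (hu : symDualFixed p n u) :
    ∀ j : Fin (n + 1), 1 ≤ (j : ℕ) → (j : ℕ) < p - 1 → u j = 0 := by
  haveI : Fact p.Prime := ⟨hp⟩
  obtain ⟨g, hg⟩ := IsCyclic.exists_generator (α := (ZMod p)ˣ)
  have horder : orderOf g = p - 1 := by
    rw [orderOf_eq_card_of_forall_mem_zpowers hg, Nat.card_eq_fintype_card, ZMod.card_units]
  set φ := ZMod.castHom (dvd_refl p) F with hφ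
  set b : F := φ ((g : ZMod p)) with hb
  have hbFp : inFp p b := by
    rw [inFp, hb, ← map_pow, ZMod.pow_card]
  have hb0 : b ≠ 0 := by
    rw [hb, Ne, map_eq_zero_iff φ φ.injective]
    exact g.ne_zero
  have h0Fp : inFp p (0 : F) := by
    rw [inFp, zero_pow hp.ne_zero]
  intro j hj1 hjp
  have E := hu 0 b h0Fp hbFp hb0
  have col : ∑ i : Fin (n + 1), u i * symMat n (0 : F) b i j = u j := by
    rw [← vecMul_apply']
    exact congrFun E j
  have hsingle : ∑ i : Fin (n + 1), u i * symMat n (0 : F) b i j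
      = u j * b ^ (j : ℕ) := by
    rw [Finset.sum_eq_single j]
    · congr 1
      simp [symMat]
    · intro i _ hij
      rcases le_or_gt (i : ℕ) (j : ℕ) with h | h
      · have hlt : (i : ℕ) < (j : ℕ) := lt_of_le_of_ne h (Fin.val_ne_of_ne hij)
        have hz : symMat n (0 : F) b i j = 0 := by
          simp only [symMat, if_pos h]
          rw [zero_pow (by omega : (j : ℕ) - (i : ℕ) ≠ 0)]
          ring
        rw [hz, mul_zero]
      · have hz : symMat n (0 : F) b i j = 0 := by
          simp only [symMat]
          rw [if_neg (by omega)]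
        rw [hz, mul_zero]
    · simp
  rw [hsingle] at col
  have hbj : b ^ (j : ℕ) ≠ 1 := by
    intro hbj
    rw [hb, ← map_pow, show (1 : F) = φ 1 from (map_one φ).symm] at hbj
    have h2 : ((g : ZMod p)) ^ (j : ℕ) = 1 := φ.injective hbj
    have h3 : g ^ (j : ℕ) = 1 := by
      ext
      rw [Units.val_pow_eq_pow_val, h2, Units.val_one]
    have h4 : orderOf g ∣ (j : ℕ) := orderOf_dvd_of_pow_eq_one h3
    rw [horder] at h4
    have := Nat.le_of_dvd (by omega) h4
    omega
  have : u j * (b ^ (j : ℕ) - 1) = 0 := by linear_combination col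
  rcases mul_eq_zero.mp this with h | h
  · exact h
  · exact absurd (by linear_combination h) hbj

lemma partB_backward_last {p n : ℕ} (hp : p.Prime) (hn : n = p - 1) (c : F) :
    symDualFixed p n (c • (Pi.single (Fin.last n) 1 : Fin (n + 1) → F)) := by
  intro a b ha hb hb0
  have hbp : b ^ (p - 1) = 1 := by
    have h1 : b ^ (p - 1) * b = 1 * b := by
      rw [one_mul, ← pow_succ, show p - 1 + 1 = p from by have := hp.one_lt; omega]
      exact hb
    exact mul_right_cancel₀ hb0 h1
  funext j
  rw [vecMul_apply']
  rw [Finset.sum_eq_single (Fin.last n)]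
  · rcases eq_or_ne j (Fin.last n) with rfl | hj
    · have : symMat n a b (Fin.last n) (Fin.last n) = 1 := by
        simp only [symMat, Fin.val_last, if_pos le_rfl, Nat.choose_self, Nat.sub_self,
          pow_zero, Nat.cast_one, one_mul]
        rw [hn, hbp]
      rw [this]
      simp
    · have hjn : (j : ℕ) < n := by
        have h1 : (j : ℕ) ≠ n := by
          intro h; exact hj (Fin.ext (by simp [h, Fin.val_last]))
        have := j.isLt
        omega
      have hz : symMat n a b (Fin.last n) j = 0 := by
        simp only [symMat, Fin.val_last]
        rw [if_neg (by omega)]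
      rw [hz, mul_zero]
      simp [Pi.single_apply, hj]
  · intro i _ hi
    simp [Pi.single_apply, hi]
  · simp

end PartB

section PartC
variable {F : Type*} [Field F]

lemma partC_lower {p n d : ℕ} [Infinite F] (hp : p.Prime) [CharP F p] (hn1 : 1 ≤ n)
    (hd0 : 0 < d) (hdp : d < p)
    {f : MvPolynomial (Fin (n + 1)) F} (hinv : symInv p n f) (hhom : f.IsHomogeneous d)
    (c : F) : eval (c • (Pi.single 0 1 : Fin (n + 1) → F)) f = 0 := by
  classical
  haveI := Fact.mk hp
  set i0 : Fin (n + 1) := ⟨0, by omega⟩ with hi0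
  set i1 : Fin (n + 1) := ⟨1, by omega⟩ with hi1
  have hi01 : i0 ≠ i1 := Fin.ne_of_val_ne (by simp [hi0, hi1])
  have hi00 : (0 : Fin (n + 1)) = i0 := by
    apply Fin.ext
    simp [hi0]
  set vv : F → (Fin (n + 1) → F) :=
    fun s i => if i = i0 then s else if i = i1 then 1 else 0 with hvv
  set uu : F → (Fin (n + 1) → F) :=
    fun t i => if i = i0 then 1 else if i = i1 then t else 0 with huu
  set ψ : Fin (n + 1) → Polynomial F :=
    fun i => if i = i0 then Polynomial.X else if i = i1 then 1 else 0 with hψ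
  set ψ2 : Fin (n + 1) → Polynomial F :=
    fun i => if i = i0 then 1 else if i = i1 then Polynomial.X else 0 with hψ2
  set g : Polynomial F := aeval ψ f with hgdef
  set G2 : Polynomial F := aeval ψ2 f with hG2def
  have hg : ∀ s : F, g.eval s = eval (vv s) f := by
    intro s
    rw [hgdef, polyEval_aeval]
    have h : (fun i => Polynomial.eval s (ψ i)) = vv s := by
      funext i
      by_cases h0 : i = i0 <;> by_cases h1 : i = i1 <;> simp [hψ, hvv, h0, h1, Ne.symm hi01]
    rw [h]
  have hG2 : ∀ t : F, G2.eval t = eval (uu t) f := by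
    intro t
    rw [hG2def, polyEval_aeval]
    have h : (fun i => Polynomial.eval t (ψ2 i)) = uu t := by
      funext i
      by_cases h0 : i = i0 <;> by_cases h1 : i = i1 <;> simp [hψ2, huu, h0, h1, Ne.symm hi01]
    rw [h]
  have hstep : ∀ s : F, eval (vv (s + 1)) f = eval (vv s) f := by
    intro s
    have hE := hinv 1 1 (one_pow p) (one_pow p) one_ne_zero
    have h1 : eval (vv s) (matAct (symMat n (1 : F) 1) f) = eval (vv s) f := by rw [hE]
    rw [eval_matAct] at h1
    have h2 : (symMat n (1 : F) 1).mulVec (vv s) = vv (s + 1) := by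
      funext i
      rw [mulVec_apply']
      rw [sum_eq_pair' _ i0 i1 hi01 (fun k hk0 hk1 => by simp [hvv, hk0, hk1])]
      have e0 : vv s i0 = s := by simp [hvv]
      have e1 : vv s i1 = 1 := by simp [hvv, hi01, Ne.symm hi01]
      rw [e0, e1, mul_one]
      by_cases h0 : i = i0
      · subst h0
        have m0 : symMat n (1 : F) 1 i0 i0 = 1 := by simp [symMat, hi0]
        have m1 : symMat n (1 : F) 1 i0 i1 = 1 := by simp [symMat, hi0, hi1]
        rw [m0, m1]
        simp [hvv]
      · by_cases h1 : i = i1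
        · subst h1
          have m0 : symMat n (1 : F) 1 i1 i0 = 0 := by
            simp only [symMat, hi0, hi1]
            rw [if_neg (by omega)]
          have m1 : symMat n (1 : F) 1 i1 i1 = 1 := by simp [symMat, hi1]
          rw [m0, m1]
          simp [hvv, hi01, Ne.symm hi01]
        · have hv0 := Fin.val_ne_of_ne h0
          have hv1 := Fin.val_ne_of_ne h1
          simp only [hi0] at hv0
          simp only [hi1] at hv1
          have m0 : symMat n (1 : F) 1 i i0 = 0 := by
            simp only [symMat, hi0]
            rw [if_neg (by omega)]
          have m1 : symMat n (1 : F) 1 i i1 = 0 := by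
            simp only [symMat, hi1]
            rw [if_neg (by omega)]
          rw [m0, m1]
          simp [hvv, h0, h1]
    rw [h2] at h1
    exact h1
  have hgper : ∀ s : F, g.eval (s + 1) = g.eval s := fun s => by rw [hg, hg, hstep]
  have hnat : ∀ k : ℕ, g.eval ((k : ℕ) : F) = g.eval 0 := by
    intro k
    induction k with
    | zero => simp
    | succ m ih => rw [Nat.cast_succ, hgper, ih]
  have hdeg : g.natDegree ≤ d := by
    rw [hgdef]
    conv_lhs => rw [← support_sum_monomial_coeff f]
    rw [map_sum]
    refine Polynomial.natDegree_sum_le_of_forall_le _ _ fun m hm => ?_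
    rw [aeval_monomial, Polynomial.algebraMap_eq]
    refine le_trans (Polynomial.natDegree_C_mul_le _ _) ?_
    rw [Finsupp.prod]
    refine le_trans (Polynomial.natDegree_prod_le _ _) ?_
    have hw := hhom (mem_support_iff.mp hm)
    erw [← Finsupp.degree_eq_weight_one] at hw
    rw [Finsupp.degree_apply] at hw
    refine le_trans (Finset.sum_le_sum (fun i _ => ?_)) (le_of_eq hw)
    refine le_trans Polynomial.natDegree_pow_le ?_
    have hψdeg : (ψ i).natDegree ≤ 1 := by
      simp only [hψ]
      split_ifs <;> simp
    calc m i * (ψ i).natDegree ≤ m i * 1 := Nat.mul_le_mul_left _ hψdeg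
      _ = m i := mul_one _
  set c0 : F := g.eval 0 with hc0
  have hgC : g = Polynomial.C c0 := by
    have hzero : g - Polynomial.C c0 = 0 := by
      apply Polynomial.eq_zero_of_natDegree_lt_card_of_eval_eq_zero _
        (f := fun k : Fin p => ((k : ℕ) : F))
      · intro k l hkl
        have hcast : ((k : ℕ) : ZMod p) = ((l : ℕ) : ZMod p) := by
          apply (ZMod.castHom (dvd_refl p) F).injective
          rw [map_natCast, map_natCast]
          exact hkl
        apply Fin.ext
        calc (k : ℕ) = ((k : ℕ) : ZMod p).val := (ZMod.val_cast_of_lt k.isLt).symm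
          _ = ((l : ℕ) : ZMod p).val := by rw [hcast]
          _ = (l : ℕ) := ZMod.val_cast_of_lt l.isLt
      · intro k
        simp only [Polynomial.eval_sub, Polynomial.eval_C]
        rw [hnat k]
        exact sub_self _
      · rw [Fintype.card_fin]
        refine lt_of_le_of_lt (le_trans (Polynomial.natDegree_sub_le _ _) ?_) hdp
        simp only [Polynomial.natDegree_C, max_eq_left (Nat.zero_le _)]
        exact hdeg
    exact sub_eq_zero.mp hzero
  have hC : ∀ s, eval (vv s) f = c0 := fun s => by rw [← hg, hgC, Polynomial.eval_C]
  have hsm : ∀ s : F, s ≠ 0 → vv s = s • uu s⁻¹ := by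
    intro s hs
    funext i
    by_cases h0 : i = i0
    · subst h0; simp [hvv, huu]
    · by_cases h1 : i = i1
      · subst h1
        simp [hvv, huu, Ne.symm hi01, mul_inv_cancel₀ hs]
      · simp [hvv, huu, h0, h1]
  have hG2val : ∀ t : F, t ≠ 0 → G2.eval t = c0 * t ^ d := by
    intro t ht
    have h1 : eval (vv t⁻¹) f = c0 := hC _
    rw [hsm t⁻¹ (inv_ne_zero ht), IsHomog.eval_smul hhom, inv_inv, ← hG2 t] at h1
    calc G2.eval t = t ^ d * ((t⁻¹) ^ d * G2.eval t) := by
          rw [← mul_assoc, ← mul_pow, mul_inv_cancel₀ ht, one_pow, one_mul]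
      _ = t ^ d * c0 := by rw [h1]
      _ = c0 * t ^ d := mul_comm _ _
  have hQ : G2 = Polynomial.C c0 * Polynomial.X ^ d := by
    have hinf : ({x : F | x ≠ 0} : Set F).Infinite := by
      have h1 : (({(0 : F)} : Set F)ᶜ).Infinite := (Set.finite_singleton 0).infinite_compl
      have h2 : ({x : F | x ≠ 0} : Set F) = ({(0 : F)} : Set F)ᶜ := by
        ext x; simp
      rw [h2]
      exact h1
    have hz : (G2 - Polynomial.C c0 * Polynomial.X ^ d) = 0 := by
      apply Polynomial.eq_zero_of_infinite_isRoot
      apply hinf.mono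
      intro x hx
      have hx0 : x ≠ 0 := hx
      simp only [Set.mem_setOf_eq, Polynomial.IsRoot, Polynomial.eval_sub, Polynomial.eval_mul,
        Polynomial.eval_C, Polynomial.eval_pow, Polynomial.eval_X]
      rw [hG2val x hx0]
      exact sub_self _
    exact sub_eq_zero.mp hz
  have hG20 : G2.eval 0 = 0 := by
    rw [hQ]
    simp [zero_pow hd0.ne']
  have hsingle_uu : (Pi.single (0 : Fin (n + 1)) (1 : F)) = uu 0 := by
    funext i
    rw [Pi.single_apply]
    by_cases h0 : i = i0
    · simp [huu, h0, ← hi00]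
    · by_cases h1 : i = i1
      · simp [huu, h0, h1, ← hi00]
      · simp [huu, h0, h1, ← hi00]
  rw [IsHomog.eval_smul hhom, hsingle_uu, ← hG2 0, hG20, mul_zero]

end PartC


section PartC2
variable {F : Type*} [Field F]

lemma normPoly_inv {p n : ℕ} [Fact p.Prime] [CharP F p] :
    symInv p n (∏ cc : ZMod p, linForm n ((ZMod.castHom (dvd_refl p) F) cc)) := by
  set φ := ZMod.castHom (dvd_refl p) F with hφ
  intro a b ha hb hb0
  obtain ⟨α, rfl⟩ := exists_zmod ha
  obtain ⟨β, rfl⟩ := exists_zmod hb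
  have hβ : β ≠ 0 := fun h => hb0 (by rw [h, map_zero])
  rw [map_prod]
  calc ∏ cc : ZMod p, matAct (symMat n (φ α) (φ β)) (linForm n (φ cc))
      = ∏ cc : ZMod p, linForm n (φ (α + cc * β)) :=
        Finset.prod_congr rfl fun cc _ => by rw [matAct_linForm, ← map_mul, ← map_add]
    _ = ∏ cc : ZMod p, linForm n (φ cc) := by
        have he : ∀ x : ZMod p,
            ((Equiv.mulRight₀ β hβ).trans (Equiv.addLeft α)) x = α + x * β := by
          intro x
          simp [Equiv.trans_apply]
        exact Fintype.prod_equiv ((Equiv.mulRight₀ β hβ).trans (Equiv.addLeft α))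
          _ _ (fun x => by rw [he x])

lemma normPoly_homog {p n : ℕ} [Fact p.Prime] [CharP F p] :
    (∏ cc : ZMod p, linForm n ((ZMod.castHom (dvd_refl p) F) cc)).IsHomogeneous p := by
  have h := IsHomogeneous.prod Finset.univ
    (fun cc : ZMod p => linForm n ((ZMod.castHom (dvd_refl p) F) cc)) (fun _ => 1)
    (fun cc _ => linForm_isHomog n _)
  have hcard : ∑ _cc : ZMod p, 1 = p := by
    rw [Finset.sum_const, smul_eq_mul, mul_one, Finset.card_univ, ZMod.card]
  rwa [hcard] at h

lemma normPoly_eval {p n : ℕ} [Fact p.Prime] [CharP F p] (c : F) :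
    eval (c • (Pi.single 0 1 : Fin (n + 1) → F))
      (∏ cc : ZMod p, linForm n ((ZMod.castHom (dvd_refl p) F) cc)) = c ^ p := by
  rw [map_prod]
  have h : ∀ cc : ZMod p, eval (c • (Pi.single 0 1 : Fin (n + 1) → F))
      (linForm n ((ZMod.castHom (dvd_refl p) F) cc)) = c :=
    fun cc => eval_linForm_single n c _
  rw [Finset.prod_congr rfl fun cc _ => h cc, Finset.prod_const, Finset.card_univ, ZMod.card]

lemma epsSym_single [IsAlgClosed F] {p n : ℕ} (hp : p.Prime) [CharP F p]
    (hn1 : 1 ≤ n) (hnp : n < p) {c : F} (hc : c ≠ 0) :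
    epsSym p n (c • (Pi.single 0 1 : Fin (n + 1) → F)) = p := by
  haveI := Fact.mk hp
  unfold epsSym
  have hpS : p ∈ {d : ℕ | 0 < d ∧ ∃ f : MvPolynomial (Fin (n + 1)) F,
      symInv p n f ∧ f.IsHomogeneous d ∧
        eval (c • (Pi.single 0 1 : Fin (n + 1) → F)) f ≠ 0} := by
    refine ⟨hp.pos, ∏ cc : ZMod p, linForm n ((ZMod.castHom (dvd_refl p) F) cc),
      normPoly_inv, normPoly_homog, ?_⟩
    rw [normPoly_eval]
    exact pow_ne_zero _ hc
  have hge : ∀ d ∈ {d : ℕ | 0 < d ∧ ∃ f : MvPolynomial (Fin (n + 1)) F,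
      symInv p n f ∧ f.IsHomogeneous d ∧
        eval (c • (Pi.single 0 1 : Fin (n + 1) → F)) f ≠ 0}, p ≤ d := by
    rintro d ⟨hd0, f, hfinv, hfhom, hfne⟩
    by_contra hlt
    push_neg at hlt
    exact hfne (partC_lower hp hn1 hd0 hlt hfinv hfhom c)
  exact le_antisymm (Nat.sInf_le hpS) (hge _ (Nat.sInf_mem ⟨p, hpS⟩))

end PartC2

theorem stmt17 {F : Type*} [Field F] [IsAlgClosed F] {p : ℕ} (hp : p.Prime) [CharP F p]
    (n : ℕ) (hn1 : 1 ≤ n) (hnp : n < p) :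
    -- (a) `V_n^G = ⟨X^n⟩ = ⟨e_0⟩`
    (∀ v : Fin (n + 1) → F, symFixed p n v ↔ ∃ c : F, v = c • (Pi.single 0 1 : Fin (n + 1) → F)) ∧
    -- (b) the invariant linear forms
    ((n ≤ p - 2 → ∀ u : Fin (n + 1) → F, symDualFixed p n u ↔ u = 0) ∧
     (n = p - 1 → ∀ u : Fin (n + 1) → F,
        symDualFixed p n u ↔ ∃ c : F, u = c • (Pi.single (Fin.last n) 1 : Fin (n + 1) → F))) ∧
    -- (c) the degree of reductivity
    deltaSym (F := F) p n = p := by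
  haveI := Fact.mk hp
  have partA : ∀ v : Fin (n + 1) → F,
      symFixed p n v ↔ ∃ c : F, v = c • (Pi.single 0 1 : Fin (n + 1) → F) := by
    intro v
    constructor
    · intro hv
      refine ⟨v 0, funext fun i => ?_⟩
      rcases eq_or_ne i 0 with rfl | hi
      · simp
      · have h1 : 1 ≤ (i : ℕ) := by
          have := Fin.val_ne_of_ne hi
          simp only [Fin.val_zero] at this
          omega
        rw [partA_forward hp hn1 hnp hv i h1]
        simp [Pi.single_apply, hi]
    · rintro ⟨c, rfl⟩
      exact partA_backward c
  refine ⟨partA, ⟨?_, ?_⟩, ?_⟩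
  · -- n ≤ p - 2
    intro hn2 u
    constructor
    · intro hu
      funext j
      show u j = 0
      rcases Nat.eq_zero_or_pos (j : ℕ) with h0 | h0
      · have hj0 : j = 0 := Fin.ext (by simp [h0])
        rw [hj0]
        exact partB_u0 hn1 hu
      · refine partB_torus hp hnp hu j h0 ?_
        have := j.isLt
        have := hp.two_le
        omega
    · rintro rfl
      intro a b _ _ _
      funext j
      rw [vecMul_apply']
      simp
  · -- n = p - 1
    intro hnp1 u
    constructor
    · intro hu
      refine ⟨u (Fin.last n), funext fun j => ?_⟩
      rcases eq_or_ne j (Fin.last n) with rfl | hj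
      · simp
      · have hjn : (j : ℕ) < n := by
          have h1 := Fin.val_ne_of_ne hj
          simp only [Fin.val_last] at h1
          have := j.isLt
          omega
        have hu0 : u j = 0 := by
          rcases Nat.eq_zero_or_pos (j : ℕ) with h0 | h0
          · have hj0 : j = 0 := Fin.ext (by simp [h0])
            rw [hj0]
            exact partB_u0 hn1 hu
          · exact partB_torus hp hnp hu j h0 (by omega)
        rw [hu0]
        simp [Pi.single_apply, hj]
    · rintro ⟨c, rfl⟩
      exact partB_backward_last hp hnp1 c
  · -- delta
    have hTset : {e : ℕ | ∃ v : Fin (n + 1) → F,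
        v ≠ 0 ∧ symFixed p n v ∧ e = epsSym p n v} = {p} := by
      ext e
      simp only [Set.mem_setOf_eq, Set.mem_singleton_iff]
      constructor
      · rintro ⟨v, hv0, hvfix, rfl⟩
        obtain ⟨c, rfl⟩ := (partA v).mp hvfix
        have hc : c ≠ 0 := by
          rintro rfl
          exact hv0 (by simp)
        exact epsSym_single hp hn1 hnp hc
      · rintro rfl
        refine ⟨(1 : F) • (Pi.single 0 1 : Fin (n + 1) → F), ?_,
          partA_backward 1, (epsSym_single hp hn1 hnp one_ne_zero).symm⟩
        intro h
        have h0 := congrFun h 0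
        simp at h0
    unfold deltaSym
    rw [hTset, csSup_singleton]
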